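/- arXiv:1401.3375 — 3 statements merged into one kernel-verified Lean document; each statement's English description precedes it below -/
import Mathlib

section
/- For any positive integers K and B, and any message assignment T : {1,...,K} → (subsets of {1,...,K}) satisfying the backhaul load constraint ∑_{i=1}^K |T_i| ≤ B·K, there exist a natural number M with M ≤ K and a subset S ⊆ {1,...,K} with 4·B·|S| ≥ (2M+1)·K such that |T_i| ≤ M for every i ∈ S. -/
lemma layer_sum {K : ℕ} (c : Fin K → ℕ) (n : ℕ) :
    ∑ M ∈ Finset.range n, (Finset.univ.filter (fun i => M < c i)).card ≤ ∑ i, c i := by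
  have h : ∀ M, (Finset.univ.filter (fun i : Fin K => M < c i)).card
      = ∑ i, (if M < c i then 1 else 0) := by
    intro M; rw [Finset.card_filter]
  simp_rw [h]
  rw [Finset.sum_comm]
  apply Finset.sum_le_sum
  intro i _
  calc ∑ M ∈ Finset.range n, (if M < c i then 1 else 0)
      = ((Finset.range n).filter (fun M => M < c i)).card := by
        rw [Finset.card_filter]
    _ ≤ (Finset.range (c i)).card := by
        apply Finset.card_le_card
        intro x hx
        simp only [Finset.mem_filter, Finset.mem_range] at *
        exact hx.2
    _ = c i := Finset.card_range _

lemma odd_sum (n : ℕ) : ∑ M ∈ Finset.range n, (2 * M + 1) = n ^ 2 := by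
  induction n with
  | zero => simp
  | succ n ih => rw [Finset.sum_range_succ, ih]; ring

/-- For any positive integers `K` and `B`, and any message assignment
`T : Fin K → Finset (Fin K)` satisfying the backhaul load constraint
`∑ i, |T i| ≤ B * K`, there exist `M ≤ K` and a subset `S` of the users with
`4 * B * |S| ≥ (2 * M + 1) * K` such that `|T i| ≤ M` for every `i ∈ S`. -/
theorem backhaul_exists_bounded_subset (K B : ℕ) (hK : 0 < K) (hB : 0 < B)
    (T : Fin K → Finset (Fin K))
    (hbackhaul : ∑ i, (T i).card ≤ B * K) :
    ∃ M : ℕ, M ≤ K ∧ ∃ S : Finset (Fin K),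
      (2 * M + 1) * K ≤ 4 * B * S.card ∧ ∀ i ∈ S, (T i).card ≤ M := by
  by_cases hcase : 2 * K + 1 ≤ 4 * B
  · refine ⟨K, le_refl _, Finset.univ, ?_, ?_⟩
    · rw [Finset.card_univ, Fintype.card_fin]
      exact Nat.mul_le_mul_right K hcase
    · intro i _
      calc (T i).card ≤ Fintype.card (Fin K) := Finset.card_le_univ _
        _ = K := Fintype.card_fin K
  · push_neg at hcase
    have h2B : 2 * B ≤ K := by omega
    -- counts
    set n : ℕ → ℕ := fun M => (Finset.univ.filter (fun i => (T i).card ≤ M)).card with hn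
    set m : ℕ → ℕ := fun M => (Finset.univ.filter (fun i => M < (T i).card)).card with hm
    have hnm : ∀ M, n M + m M = K := by
      intro M
      have := Finset.card_filter_add_card_filter_not
        (s := (Finset.univ : Finset (Fin K))) (p := fun i => (T i).card ≤ M)
      simpa [hn, hm, Nat.not_le, Finset.card_univ] using this
    have hmsum : ∑ M ∈ Finset.range (2 * B), m M ≤ B * K :=
      le_trans (layer_sum (fun i => (T i).card) (2 * B)) hbackhaul
    -- claim: some M in range (2B) works
    have claim : ∃ M ∈ Finset.range (2 * B), (2 * M + 1) * K ≤ 4 * B * n M := by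
      by_contra hc
      push_neg at hc
      have hlt : ∀ M ∈ Finset.range (2 * B),
          4 * B * K < (2 * M + 1) * K + 4 * B * m M := by
        intro M hM
        have h1 := hc M hM
        have h2 := hnm M
        nlinarith [h1, h2]
      have hsum : ∑ M ∈ Finset.range (2 * B), (4 * B * K)
          < ∑ M ∈ Finset.range (2 * B), ((2 * M + 1) * K + 4 * B * m M) := by
        apply Finset.sum_lt_sum_of_nonempty
        · exact Finset.nonempty_range_iff.mpr (by omega)
        · exact hlt
      rw [Finset.sum_const, Finset.card_range, smul_eq_mul] at hsum
      rw [Finset.sum_add_distrib, ← Finset.sum_mul, odd_sum, ← Finset.mul_sum] at hsum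
      nlinarith [hmsum, hsum]
    obtain ⟨M, hMmem, hMineq⟩ := claim
    rw [Finset.mem_range] at hMmem
    refine ⟨M, by omega, Finset.univ.filter (fun i => (T i).card ≤ M), hMineq, ?_⟩
    intro i hi
    exact (Finset.mem_filter.mp hi).2
end

section
/- Let B and K be positive integers and let f : {1,...,K} → ℕ satisfy ∑_{i=1}^K f(i) ≤ B·K. If 4B·|{i : f(i) ≥ 2B}| > K, then there exists a natural number M with M ≤ 2B−2 such that 4B·|{i : f(i) ≤ M}| > (2M+1)·K. -/
open Finset

lemma aux_min_sum (n x : ℕ) :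
    ∑ M ∈ Finset.range n, (if M < x then 1 else 0) = min n x := by
  induction n with
  | zero => simp
  | succ n ih => rw [Finset.sum_range_succ, ih]; split <;> omega

lemma aux_sum_odd (n : ℕ) : ∑ M ∈ Finset.range n, (2 * M + 1) = n * n := by
  induction n with
  | zero => simp
  | succ n ih => rw [Finset.sum_range_succ, ih]; ring

/-- If `f : Fin K → ℕ` satisfies `∑ i, f i ≤ B * K` and more than a `1/(4B)`
fraction of indices have `f i ≥ 2B`, then for some `M ≤ 2B - 2` more than a
`(2M+1)/(4B)` fraction of indices have `f i ≤ M`. -/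
theorem backhaul_counting_step (B K : ℕ) (hB : 0 < B) (hK : 0 < K)
    (f : Fin K → ℕ) (hsum : ∑ i, f i ≤ B * K)
    (hbig : K < 4 * B * (Finset.univ.filter (fun i => 2 * B ≤ f i)).card) :
    ∃ M : ℕ, M ≤ 2 * B - 2 ∧
      (2 * M + 1) * K < 4 * B * (Finset.univ.filter (fun i => f i ≤ M)).card := by
  by_contra hcon
  push_neg at hcon
  set n := 2 * B - 1 with hn
  have hn1 : 2 * B = n + 1 := by omega
  set S := (Finset.univ.filter (fun i => 2 * B ≤ f i)).card with hS
  set U := ∑ M ∈ Finset.range n, (Finset.univ.filter (fun i => M + 1 ≤ f i)).card with hU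
  -- Key layer-cake inequality: U + S ≤ ∑ f
  have key : U + S ≤ ∑ i, f i := by
    have h1 : ∀ M : ℕ, (Finset.univ.filter (fun i : Fin K => M + 1 ≤ f i)).card
        = ∑ i, (if M < f i then 1 else 0) := by
      intro M
      rw [Finset.card_filter]
      refine Finset.sum_congr rfl fun i _ => ?_
      congr 1
    have h2 : S = ∑ i, (if 2 * B ≤ f i then 1 else 0) := by
      rw [hS, Finset.card_filter]
    calc U + S
        = (∑ i, min n (f i)) + ∑ i, (if 2 * B ≤ f i then 1 else 0) := by
          rw [h2, hU]
          congr 1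
          rw [Finset.sum_congr rfl fun M _ => h1 M, Finset.sum_comm]
          exact Finset.sum_congr rfl fun i _ => aux_min_sum n (f i)
      _ = ∑ i, (min n (f i) + if 2 * B ≤ f i then 1 else 0) := by
          rw [Finset.sum_add_distrib]
      _ ≤ ∑ i, f i := by
          refine Finset.sum_le_sum fun i _ => ?_
          have hm1 := min_le_right n (f i)
          split_ifs with h
          · have : min n (f i) = n := min_eq_left (by omega)
            omega
          · omega
  -- per-level bound from the contradiction hypothesis
  have hupper : ∀ M ∈ Finset.range n,
      4 * B * K ≤ 4 * B * (Finset.univ.filter (fun i => M + 1 ≤ f i)).card + (2 * M + 1) * K := by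
    intro M hMr
    rw [Finset.mem_range] at hMr
    have hcM := hcon M (by omega)
    have hc : (Finset.univ.filter (fun i => f i ≤ M)).card
        + (Finset.univ.filter (fun i => M + 1 ≤ f i)).card = K := by
      have e : (Finset.univ.filter (fun i : Fin K => ¬ f i ≤ M))
          = Finset.univ.filter (fun i => M + 1 ≤ f i) := by
        apply Finset.filter_congr
        intro i _
        constructor <;> intro <;> omega
      have := Finset.card_filter_add_card_filter_not
        (s := (Finset.univ : Finset (Fin K))) (p := fun i : Fin K => f i ≤ M)
      rw [e] at this
      simpa using this
    calc 4 * B * K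
        = 4 * B * ((Finset.univ.filter (fun i => f i ≤ M)).card
            + (Finset.univ.filter (fun i => M + 1 ≤ f i)).card) := by rw [hc]
      _ = 4 * B * (Finset.univ.filter (fun i => f i ≤ M)).card
            + 4 * B * (Finset.univ.filter (fun i => M + 1 ≤ f i)).card := by ring
      _ ≤ (2 * M + 1) * K
            + 4 * B * (Finset.univ.filter (fun i => M + 1 ≤ f i)).card :=
          Nat.add_le_add_right hcM _
      _ = 4 * B * (Finset.univ.filter (fun i => M + 1 ≤ f i)).card + (2 * M + 1) * K := by ring
  have hsum2 : n * (4 * B * K) ≤ 4 * B * U + n * n * K := by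
    calc n * (4 * B * K) = ∑ _M ∈ Finset.range n, 4 * B * K := by
          rw [Finset.sum_const, Finset.card_range, smul_eq_mul]
      _ ≤ ∑ M ∈ Finset.range n,
          (4 * B * (Finset.univ.filter (fun i => M + 1 ≤ f i)).card + (2 * M + 1) * K) :=
          Finset.sum_le_sum hupper
      _ = 4 * B * U + n * n * K := by
          rw [Finset.sum_add_distrib, hU, Finset.mul_sum, ← Finset.sum_mul, aux_sum_odd]
  have htot : U + S ≤ B * K := le_trans key hsum
  have h4B : 4 * B = 2 * n + 2 := by omega
  rw [h4B] at hsum2 hbig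
  have htot2 : 2 * (2 * n + 2) * (U + S) ≤ (2 * n + 2) * (n + 1) * K := by
    calc 2 * (2 * n + 2) * (U + S) ≤ 2 * (2 * n + 2) * (B * K) :=
          Nat.mul_le_mul_left _ htot
      _ = (2 * n + 2) * (2 * B) * K := by ring
      _ = (2 * n + 2) * (n + 1) * K := by rw [hn1]
  nlinarith [hsum2, hbig, htot2]
end

section
/- Let B and K be positive integers and let f : {1,...,K} → ℕ satisfy ∑_{i=1}^K f(i) ≤ B·K and 4B·|{i : f(i) ≥ 2B}| > K. Then either 4B·|{i : f(i) = 0}| > K, or there exists m with 1 ≤ m ≤ 2B−1 such that 2B·|{i : f(i) = m}| > K. -/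
/-- If `f : Fin K → ℕ` satisfies `∑ i, f i ≤ B * K` and more than a `1/(4B)`
fraction of indices have `f i ≥ 2B`, then either more than a `1/(4B)` fraction
have `f i = 0`, or for some `m` with `1 ≤ m ≤ 2B - 1` more than a `1/(2B)`
fraction have `f i = m`. -/
theorem exists_overloaded_level (B K : ℕ) (hB : 0 < B) (hK : 0 < K)
    (f : Fin K → ℕ) (hsum : ∑ i, f i ≤ B * K)
    (hbig : K < 4 * B * (Finset.univ.filter (fun i => 2 * B ≤ f i)).card) :
    K < 4 * B * (Finset.univ.filter (fun i => f i = 0)).card ∨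
      ∃ m : ℕ, 1 ≤ m ∧ m ≤ 2 * B - 1 ∧
        K < 2 * B * (Finset.univ.filter (fun i => f i = m)).card := by
  by_contra hcon
  push_neg at hcon
  obtain ⟨h0, hm⟩ := hcon
  obtain ⟨b, rfl⟩ : ∃ b, B = b + 1 := ⟨B - 1, by omega⟩
  set d : ℕ → ℕ := fun m => (Finset.univ.filter (fun i => min (f i) (2*(b+1)) = m)).card with hd
  have hcard : ∑ m ∈ Finset.range (2*(b+1)+1), d m = K := by
    have := Finset.card_eq_sum_card_fiberwise
      (s := (Finset.univ : Finset (Fin K))) (t := Finset.range (2*(b+1)+1))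
      (f := fun i => min (f i) (2*(b+1)))
      (fun i _ => Finset.mem_range.mpr (Nat.lt_succ_of_le (min_le_right _ _)))
    simpa using this.symm
  have hSsum : ∑ m ∈ Finset.range (2*(b+1)+1), m * d m ≤ (b+1) * K := by
    calc ∑ m ∈ Finset.range (2*(b+1)+1), m * d m
        = ∑ i, min (f i) (2*(b+1)) := by
          rw [← Finset.sum_fiberwise_of_maps_to (g := fun i => min (f i) (2*(b+1)))
            (fun i _ => Finset.mem_range.mpr (Nat.lt_succ_of_le (min_le_right _ _)))
            (fun i => min (f i) (2*(b+1)))]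
          refine Finset.sum_congr rfl fun m hmr => ?_
          rw [Finset.sum_congr rfl (fun i hi => (Finset.mem_filter.mp hi).2),
            Finset.sum_const, smul_eq_mul, mul_comm]
      _ ≤ ∑ i, f i := Finset.sum_le_sum fun i _ => min_le_left _ _
      _ ≤ (b+1) * K := hsum
  have hdn : K + 1 ≤ 4 * (b+1) * d (2*(b+1)) := by
    have he : d (2*(b+1)) = (Finset.univ.filter (fun i => 2 * (b+1) ≤ f i)).card := by
      rw [hd]
      exact congrArg Finset.card (Finset.filter_congr (fun i _ => by omega))
    rw [he]; exact hbig
  have hd0 : 4 * (b+1) * d 0 ≤ K := by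
    have he : d 0 = (Finset.univ.filter (fun i => f i = 0)).card := by
      rw [hd]
      exact congrArg Finset.card (Finset.filter_congr (fun i _ => by omega))
    rw [he]; exact h0
  have hdm : ∀ m, 1 ≤ m → m ≤ 2*b+1 → 2 * (b+1) * d m ≤ K := by
    intro m h1 h2
    have he : d m = (Finset.univ.filter (fun i => f i = m)).card := by
      rw [hd]
      exact congrArg Finset.card (Finset.filter_congr (fun i _ => by omega))
    rw [he]; exact hm m h1 (by omega)
  have hsplit : ∑ m ∈ Finset.range (2*(b+1)), d m + d (2*(b+1)) = K := by
    rw [← hcard, Finset.sum_range_succ]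
  have e1 : ∑ m ∈ Finset.range (2*(b+1)), (m * d m + (2*b+1 - m) * d m)
      = ∑ m ∈ Finset.range (2*(b+1)), (2*b+1) * d m :=
    Finset.sum_congr rfl fun m hmr => by
      have := Finset.mem_range.mp hmr
      rw [← Nat.add_mul]
      congr 1
      omega
  have hid : (∑ m ∈ Finset.range (2*(b+1)+1), m * d m)
        + (∑ m ∈ Finset.range (2*(b+1)), (2*b+1 - m) * d m)
      = (2*b+1) * K + d (2*(b+1)) := by
    calc (∑ m ∈ Finset.range (2*(b+1)+1), m * d m)
          + (∑ m ∈ Finset.range (2*(b+1)), (2*b+1 - m) * d m)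
        = (∑ m ∈ Finset.range (2*(b+1)), (m * d m + (2*b+1 - m) * d m))
            + (2*(b+1)) * d (2*(b+1)) := by
          rw [Finset.sum_range_succ, Finset.sum_add_distrib]; ring
      _ = (2*b+1) * (∑ m ∈ Finset.range (2*(b+1)), d m) + (2*(b+1)) * d (2*(b+1)) := by
          rw [e1, Finset.mul_sum]
      _ = (2*b+1) * (∑ m ∈ Finset.range (2*(b+1)), d m + d (2*(b+1))) + d (2*(b+1)) := by
          ring
      _ = (2*b+1) * K + d (2*(b+1)) := by rw [hsplit]
  have hTsplit : ∑ m ∈ Finset.range (2*(b+1)), (2*b+1 - m) * d m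
      = (∑ m ∈ Finset.range (2*b+1), (2*b+1 - (m+1)) * d (m+1)) + (2*b+1) * d 0 := by
    rw [show 2*(b+1) = (2*b+1)+1 by ring, Finset.sum_range_succ']
    simp
  have hT' : 2 * (b+1) * (∑ m ∈ Finset.range (2*b+1), (2*b+1 - (m+1)) * d (m+1))
      ≤ ((2 * b + 1) * b) * K := by
    have hG : (∑ m ∈ Finset.range (2*b+1), (2*b+1 - (m+1))) = (2 * b + 1) * b := by
      have h1 : ∑ m ∈ Finset.range (2*b+1), (2*b+1 - (m+1))
          = ∑ m ∈ Finset.range (2*b+1), m := by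
        rw [← Finset.sum_range_reflect (fun j => j) (2*b+1)]
        exact Finset.sum_congr rfl fun m hmr => by
          have := Finset.mem_range.mp hmr; omega
      have h2 := Finset.sum_range_id_mul_two (2*b+1)
      have h3 : (2*b+1) * ((2*b+1) - 1) = ((2 * b + 1) * b) * 2 := by
        simp only [Nat.add_sub_cancel]; ring
      have h4 : (∑ m ∈ Finset.range (2*b+1), m) * 2 = ((2 * b + 1) * b) * 2 := by
        rw [h2, h3]
      rw [h1, Nat.eq_of_mul_eq_mul_right (by norm_num : 0 < 2) h4]
    calc 2 * (b+1) * (∑ m ∈ Finset.range (2*b+1), (2*b+1 - (m+1)) * d (m+1))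
        ≤ (∑ m ∈ Finset.range (2*b+1), (2*b+1 - (m+1))) * K := by
          rw [Finset.mul_sum, Finset.sum_mul]
          refine Finset.sum_le_sum fun m hmr => ?_
          have h1 : 2 * (b+1) * d (m+1) ≤ K :=
            hdm (m+1) (by omega) (by have := Finset.mem_range.mp hmr; omega)
          calc 2 * (b+1) * ((2*b+1 - (m+1)) * d (m+1))
              = (2*b+1 - (m+1)) * (2 * (b+1) * d (m+1)) := by ring
            _ ≤ (2*b+1 - (m+1)) * K := Nat.mul_le_mul_left _ h1
      _ = ((2 * b + 1) * b) * K := by rw [hG]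
  -- final contradiction
  set S := ∑ m ∈ Finset.range (2*(b+1)+1), m * d m with hS
  set T' := ∑ m ∈ Finset.range (2*b+1), (2*b+1 - (m+1)) * d (m+1) with hT
  rw [hTsplit] at hid
  have hkey : 4 * (b+1) * ((2*b+1) * K) + (K + 1)
      ≤ 4*(b+1)*S + 4*(b+1)*T' + 4*(b+1)*((2*b+1) * d 0) := by
    nlinarith [hid, hdn]
  have hb1 : 4*(b+1)*S ≤ 4*(b+1)*((b+1)*K) := Nat.mul_le_mul_left _ hSsum
  have hb2 : 4*(b+1)*T' ≤ 2 * (((2*b+1)*b)*K) := by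
    calc 4*(b+1)*T' = 2 * (2*(b+1)*T') := by ring
      _ ≤ 2 * (((2*b+1)*b)*K) := Nat.mul_le_mul_left _ hT'
  have hb3 : 4*(b+1)*((2*b+1) * d 0) ≤ (2*b+1) * K := by
    calc 4*(b+1)*((2*b+1) * d 0) = (2*b+1) * (4*(b+1) * d 0) := by ring
      _ ≤ (2*b+1) * K := Nat.mul_le_mul_left _ hd0
  have hfin : 4 * (b+1) * ((2*b+1) * K) + (K + 1)
      ≤ 4*(b+1)*((b+1)*K) + 2 * (((2*b+1)*b)*K) + (2*b+1) * K := by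
    linarith [hkey, hb1, hb2, hb3]
  nlinarith [hfin]
end
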